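/- Let L, L' be Hom-Lie algebras over a field of characteristic ≠ 2 defining Hom-Lie affgebras A = A(L;α,κ,λ,r) and A' = A(L';α',κ',λ',r') with brackets {a,b} = [a,b] + κ(a) + λ(b-a) + r (and primed analogue), where κ, λ commute with α and satisfy λ([a,b]) = [λ(a),α(b)] - [α(a),κ(b)] + [α(a),λ(b)]. If φ : A → A' is a homomorphism of Hom-Lie affgebras (affine, φα = α'φ, φ{a,b} = {φ(a),φ(b)}'), then the linear map ψ(a) = φ(a) - φ(0) is a Hom-Lie algebra homomorphism L → L', and with q' = φ(0) the conditions q' = α'(q'), ψκ = κ'ψ, ψλ = (ad_{q'} + λ')ψ, and ψ(r) = r' - q' + κ'(q') hold. -/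

import Mathlib

/-- conversely, a homomorphism of Hom-Lie affgebras
φ : A(L;α,κ,λ,r) → A(L';α',κ',λ',r') yields a Hom-Lie algebra homomorphism
ψ(a) = φ(a) - φ(0), and with q' = φ(0) the conditions q' = α'(q'), ψκ = κ'ψ,
ψλ = (ad_{q'} + λ')ψ and ψ(r) = r' - q' + κ'(q') hold. -/
theorem stmt_19 {K L L' : Type*} [Field K]
    [AddCommGroup L] [Module K L] [AddCommGroup L'] [Module K L']
    (h2 : (2 : K) ≠ 0)
    (lb : L →ₗ[K] L →ₗ[K] L) (α : L →ₗ[K] L)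
    (hanti : ∀ a b, lb a b = - lb b a)
    (hjac : ∀ a b c, lb (α a) (lb b c) + lb (α b) (lb c a) + lb (α c) (lb a b) = 0)
    (lb' : L' →ₗ[K] L' →ₗ[K] L') (α' : L' →ₗ[K] L')
    (hanti' : ∀ a b, lb' a b = - lb' b a)
    (hjac' : ∀ a b c,
      lb' (α' a) (lb' b c) + lb' (α' b) (lb' c a) + lb' (α' c) (lb' a b) = 0)
    (κ lam : L →ₗ[K] L) (r : L)
    (hκα : ∀ a, κ (α a) = α (κ a)) (hlama : ∀ a, lam (α a) = α (lam a))
    (hcompat : ∀ a b,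
      lam (lb a b) = lb (lam a) (α b) - lb (α a) (κ b) + lb (α a) (lam b))
    (κ' lam' : L' →ₗ[K] L') (r' : L')
    (hκα' : ∀ a, κ' (α' a) = α' (κ' a)) (hlama' : ∀ a, lam' (α' a) = α' (lam' a))
    (hcompat' : ∀ a b,
      lam' (lb' a b) = lb' (lam' a) (α' b) - lb' (α' a) (κ' b) + lb' (α' a) (lam' b))
    (br : L → L → L) (hbr : ∀ a b, br a b = lb a b + κ a + lam (b - a) + r)
    (br' : L' → L' → L') (hbr' : ∀ a b, br' a b = lb' a b + κ' a + lam' (b - a) + r')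
    (φ : L → L')
    -- φ is an affine map
    (haff1 : ∀ a b c : L, φ (a - b + c) = φ a - φ b + φ c)
    (haff2 : ∀ (ξ : K) (a b : L),
      φ (ξ • b + (1 - ξ) • a) = ξ • φ b + (1 - ξ) • φ a)
    -- φ intertwines the twist maps and preserves the brackets
    (hφα : ∀ a, φ (α a) = α' (φ a))
    (hφbr : ∀ a b, φ (br a b) = br' (φ a) (φ b)) :
    let ψ : L → L' := fun a => φ a - φ 0
    let q' : L' := φ 0
    -- ψ is a Hom-Lie algebra homomorphism
    (∀ a b, ψ (a + b) = ψ a + ψ b) ∧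
    (∀ (ξ : K) (a : L), ψ (ξ • a) = ξ • ψ a) ∧
    (∀ a b, ψ (lb a b) = lb' (ψ a) (ψ b)) ∧
    (∀ a, ψ (α a) = α' (ψ a)) ∧
    -- the four compatibility conditions
    q' = α' q' ∧
    (∀ a, ψ (κ a) = κ' (ψ a)) ∧
    (∀ a, ψ (lam a) = lb' q' (ψ a) + lam' (ψ a)) ∧
    ψ r = r' - q' + κ' q' := by
  intro ψ q'
  -- basic linearity facts for ψ
  have hφadd : ∀ x y : L, φ (x + y) = φ x + φ y - φ 0 := by
    intro x y
    have h := haff1 x 0 y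
    simp only [sub_zero] at h
    rw [h]; abel
  have hφsub : ∀ x y : L, φ (x - y) = φ x - φ y + φ 0 := by
    intro x y
    have h := haff1 x y 0
    simp only [add_zero] at h
    rw [h]
  have hadd : ∀ a b, ψ (a + b) = ψ a + ψ b := by
    intro a b
    show φ (a + b) - φ 0 = (φ a - φ 0) + (φ b - φ 0)
    rw [hφadd]; abel
  have hsmul : ∀ (ξ : K) (a : L), ψ (ξ • a) = ξ • ψ a := by
    intro ξ a
    have h := haff2 ξ 0 a
    simp only [smul_zero, add_zero] at h
    show φ (ξ • a) - φ 0 = ξ • (φ a - φ 0)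
    rw [h, sub_smul, one_smul, smul_sub]; abel
  have hψ0 : ψ 0 = 0 := sub_self _
  have hsub : ∀ a b, ψ (a - b) = ψ a - ψ b := by
    intro a b
    have h := hadd (a - b) b
    rw [sub_add_cancel] at h
    rw [h]; abel
  -- q' is fixed by α'
  have hq : q' = α' q' := by
    have h := hφα 0
    rw [map_zero] at h
    exact h
  have hψα : ∀ a, ψ (α a) = α' (ψ a) := by
    intro a
    show φ (α a) - φ 0 = α' (φ a - φ 0)
    rw [map_sub, hφα a, ← hq]
  -- lb' q' q' = 0
  have hzz : lb' q' q' = 0 := by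
    have h := hanti' q' q'
    have h2' : (2 : K) • lb' q' q' = 0 := by
      rw [two_smul]
      nth_rewrite 1 [h]
      abel
    rcases smul_eq_zero.mp h2' with h' | h'
    · exact absurd h' h2
    · exact h'
  -- φ in terms of ψ
  have hφψ : ∀ x, φ x = ψ x + q' := by
    intro x
    show φ x = (φ x - φ 0) + φ 0
    abel
  -- the key expanded bracket identity
  have hkey : ∀ a b, ψ (lb a b) + ψ (κ a) + (ψ (lam b) - ψ (lam a)) + ψ r + q'
      = lb' (ψ a) (ψ b) + lb' (ψ a) q' + lb' q' (ψ b)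
        + (κ' (ψ a) + κ' q') + (lam' (ψ b) - lam' (ψ a)) + r' := by
    intro a b
    have h := hφbr a b
    rw [hbr, hbr'] at h
    rw [map_sub lam, hφadd, hφadd, hφadd, hφsub, hφψ a, hφψ b,
      hφψ (lb a b), hφψ (κ a), hφψ (lam b), hφψ (lam a), hφψ r] at h
    simp only [map_add, map_sub, LinearMap.add_apply, hzz] at h
    rw [show φ 0 = q' from rfl] at h
    rw [← sub_eq_zero] at h ⊢
    rw [← sub_eq_zero] at h
    abel_nf at h ⊢
    convert h using 2
  -- condition on r
  have hr : ψ r = r' - q' + κ' q' := by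
    have h := hkey 0 0
    simp only [map_zero, LinearMap.zero_apply, hψ0, hzz] at h
    rw [← sub_eq_zero] at h ⊢
    abel_nf at h ⊢
    convert h using 2
  -- condition on lam
  have hlam : ∀ a, ψ (lam a) = lb' q' (ψ a) + lam' (ψ a) := by
    intro a
    have h := hkey 0 a
    simp only [map_zero, LinearMap.zero_apply, hψ0, hzz] at h
    rw [hr] at h
    rw [← sub_eq_zero] at h ⊢
    abel_nf at h ⊢
    convert h using 2
  -- condition on κ
  have hκ : ∀ a, ψ (κ a) = κ' (ψ a) := by
    intro a
    have h := hkey a 0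
    simp only [map_zero, LinearMap.zero_apply, hψ0, hzz] at h
    rw [hr, hlam a, hanti' (ψ a) q'] at h
    rw [← sub_eq_zero] at h ⊢
    abel_nf at h ⊢
    convert h using 2
  -- ψ preserves the Lie bracket
  have hlb : ∀ a b, ψ (lb a b) = lb' (ψ a) (ψ b) := by
    intro a b
    have h := hkey a b
    rw [hr, hlam a, hlam b, hκ a, hanti' (ψ a) q'] at h
    rw [← sub_eq_zero] at h ⊢
    abel_nf at h ⊢
    convert h using 2
  exact ⟨hadd, hsmul, hlb, hψα, hq, hκ, hlam, hr⟩
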